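/- Let m∈ℤ and let ψ:(−π/2,π/2)→ℂ be twice differentiable. Define φ(y):=(cos y)^{−1/2}·ψ(y) for y∈(−π/2,π/2). Then for every x∈(−π/2,π/2): −φ″(x) + tan(x)·φ′(x) + (m²/cos²x)·φ(x) = (cos x)^{−1/2}·( −ψ″(x) + V(x)·ψ(x) ), where V(x) := (8m² − 3 − cos(2x)) / (8·cos²x). -/

import Mathlib

/-- the pointwise differential identity underlying the unitary
equivalence `U₊ψ = (cos x)^{-1/2} ψ` between the positive-curvature transverse
Hamiltonian `H_{I(+1)}^m` and `-d²/dx² + V` with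
`V(x) = (8m² - 3 - cos 2x)/(8 cos² x)`. -/
theorem pt_positive_curvature_transform
    (m : ℤ) (ψ ψ' ψ'' : ℝ → ℂ)
    (hd1 : ∀ x ∈ Set.Ioo (-(Real.pi / 2)) (Real.pi / 2), HasDerivAt ψ (ψ' x) x)
    (hd2 : ∀ x ∈ Set.Ioo (-(Real.pi / 2)) (Real.pi / 2), HasDerivAt ψ' (ψ'' x) x)
    (φ : ℝ → ℂ)
    (hφ : φ = fun y : ℝ => ((Real.cos y ^ (-(1 / 2 : ℝ)) : ℝ) : ℂ) * ψ y) :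
    ∃ φ' φ'' : ℝ → ℂ,
      (∀ x ∈ Set.Ioo (-(Real.pi / 2)) (Real.pi / 2), HasDerivAt φ (φ' x) x) ∧
      (∀ x ∈ Set.Ioo (-(Real.pi / 2)) (Real.pi / 2), HasDerivAt φ' (φ'' x) x) ∧
      ∀ x ∈ Set.Ioo (-(Real.pi / 2)) (Real.pi / 2),
        -φ'' x + (Real.tan x : ℂ) * φ' x
            + (((m : ℝ) ^ 2 / Real.cos x ^ 2 : ℝ) : ℂ) * φ x =
          ((Real.cos x ^ (-(1 / 2 : ℝ)) : ℝ) : ℂ) *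
            (-ψ'' x + (((8 * (m : ℝ) ^ 2 - 3 - Real.cos (2 * x))
              / (8 * Real.cos x ^ 2) : ℝ) : ℂ) * ψ x) := by
  subst hφ
  refine ⟨fun x => ((1/2 * Real.sin x * Real.cos x ^ (-(3/2) : ℝ) : ℝ) : ℂ) * ψ x
      + ((Real.cos x ^ (-(1/2) : ℝ) : ℝ) : ℂ) * ψ' x,
    fun x => ((1/2 * Real.cos x ^ (-(1/2) : ℝ)
        + 3/4 * Real.sin x ^ 2 * Real.cos x ^ (-(5/2) : ℝ) : ℝ) : ℂ) * ψ x
      + 2 * ((1/2 * Real.sin x * Real.cos x ^ (-(3/2) : ℝ) : ℝ) : ℂ) * ψ' x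
      + ((Real.cos x ^ (-(1/2) : ℝ) : ℝ) : ℂ) * ψ'' x, ?_, ?_, ?_⟩
  · intro x hx
    have hc : 0 < Real.cos x := Real.cos_pos_of_mem_Ioo hx
    have hw : HasDerivAt (fun y => Real.cos y ^ (-(1/2) : ℝ))
        (1/2 * Real.sin x * Real.cos x ^ (-(3/2) : ℝ)) x := by
      have h := (Real.hasDerivAt_cos x).rpow_const (p := -(1/2)) (Or.inl hc.ne')
      convert h using 1
      have : (-(1/2 : ℝ)) - 1 = -(3/2) := by norm_num
      rw [this]; ring
    have : HasDerivAt (fun y => ((Real.cos y ^ (-(1/2) : ℝ) : ℝ) : ℂ) * ψ y) _ x :=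
      hw.ofReal_comp.mul (hd1 x hx)
    convert this using 1
  · intro x hx
    have hc : 0 < Real.cos x := Real.cos_pos_of_mem_Ioo hx
    have hw : HasDerivAt (fun y => Real.cos y ^ (-(1/2) : ℝ))
        (1/2 * Real.sin x * Real.cos x ^ (-(3/2) : ℝ)) x := by
      have h := (Real.hasDerivAt_cos x).rpow_const (p := -(1/2)) (Or.inl hc.ne')
      convert h using 1
      have : (-(1/2 : ℝ)) - 1 = -(3/2) := by norm_num
      rw [this]; ring
    have hw1 : HasDerivAt (fun y => 1/2 * Real.sin y * Real.cos y ^ (-(3/2) : ℝ))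
        (1/2 * Real.cos x ^ (-(1/2) : ℝ)
          + 3/4 * Real.sin x ^ 2 * Real.cos x ^ (-(5/2) : ℝ)) x := by
      have hp : HasDerivAt (fun y => Real.cos y ^ (-(3/2) : ℝ))
          (3/2 * Real.sin x * Real.cos x ^ (-(5/2) : ℝ)) x := by
        have h := (Real.hasDerivAt_cos x).rpow_const (p := -(3/2)) (Or.inl hc.ne')
        convert h using 1
        have : (-(3/2 : ℝ)) - 1 = -(5/2) := by norm_num
        rw [this]; ring
      have hs : HasDerivAt (fun y => 1/2 * Real.sin y) (1/2 * Real.cos x) x :=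
        (Real.hasDerivAt_sin x).const_mul (1/2)
      have h : HasDerivAt (fun y => 1/2 * Real.sin y * Real.cos y ^ (-(3/2) : ℝ)) _ x :=
        hs.mul hp
      convert h using 1
      have hcc : Real.cos x * Real.cos x ^ (-(3/2) : ℝ) = Real.cos x ^ (-(1/2) : ℝ) := by
        nth_rewrite 1 [← Real.rpow_one (Real.cos x)]
        rw [← Real.rpow_add hc]; norm_num
      calc 1/2 * Real.cos x ^ (-(1/2) : ℝ) + 3/4 * Real.sin x ^ 2 * Real.cos x ^ (-(5/2) : ℝ)
          = 1/2 * (Real.cos x * Real.cos x ^ (-(3/2) : ℝ))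
            + 3/4 * Real.sin x ^ 2 * Real.cos x ^ (-(5/2) : ℝ) := by rw [hcc]
        _ = _ := by ring
    have : HasDerivAt (fun y => ((1/2 * Real.sin y * Real.cos y ^ (-(3/2) : ℝ) : ℝ) : ℂ) * ψ y
        + ((Real.cos y ^ (-(1/2) : ℝ) : ℝ) : ℂ) * ψ' y) _ x :=
      (hw1.ofReal_comp.mul (hd1 x hx)).add (hw.ofReal_comp.mul (hd2 x hx))
    convert this using 1
    push_cast
    ring
  · intro x hx
    have hc : 0 < Real.cos x := Real.cos_pos_of_mem_Ioo hx
    have h32 : Real.cos x ^ (-(3/2) : ℝ) = Real.cos x ^ (-(1/2) : ℝ) / Real.cos x := by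
      rw [show (-(3/2) : ℝ) = -(1/2) - 1 by norm_num, Real.rpow_sub hc, Real.rpow_one]
    have h52 : Real.cos x ^ (-(5/2) : ℝ) = Real.cos x ^ (-(1/2) : ℝ) / Real.cos x ^ 2 := by
      rw [show (-(5/2) : ℝ) = -(1/2) - 2 by norm_num, Real.rpow_sub hc,
        show (2 : ℝ) = ((2 : ℕ) : ℝ) by norm_num, Real.rpow_natCast]
    have htan : Real.tan x = Real.sin x / Real.cos x := Real.tan_eq_sin_div_cos x
    have hcos2 : Real.cos (2 * x) = 2 * Real.cos x ^ 2 - 1 := Real.cos_two_mul x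
    have hcc : Complex.cos (x:ℂ) ≠ 0 := by
      rw [← Complex.ofReal_cos]; exact_mod_cast hc.ne'
    have hs2 : Complex.sin (x:ℂ) ^ 2 = 1 - Complex.cos (x:ℂ) ^ 2 := by
      linear_combination Complex.sin_sq_add_cos_sq (x:ℂ)
    beta_reduce
    rw [h32, h52, htan, hcos2]
    push_cast
    ring_nf
    simp only [hs2]
    field_simp
    ring
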